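/- Let (M_n) be positive integers with M_{n+1} ≥ q·M_n for q > 1, and f one-periodic, mean zero, of bounded variation with V(f) ≤ 1. Then there is a constant C (depending only on q and V(f)) such that |∫_{[0,1)} f(M_n x) f(M_{n+k} x) dx| ≤ C · ‖f‖₂ · q^{-k/2} for all n and all k ≥ 1. -/

import Mathlib

open Real MeasureTheory Set
open scoped ENNReal NNReal

/-- Variation on the closed period interval is at most twice that on the half-open one,
when the endpoints have equal values. -/
lemma varIcc_le_two_mul {f : ℝ → ℝ} (hf : f 1 = f 0) :
    eVariationOn f (Set.Icc (0:ℝ) 1) ≤ 2 * eVariationOn f (Set.Ico (0:ℝ) 1) := by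
  classical
  set V := eVariationOn f (Set.Ico (0:ℝ) 1) with hV
  refine iSup_le ?_
  rintro ⟨n, u, hu, us⟩
  dsimp only
  by_cases hlt : ∀ i, u i < 1
  · have husi : ∀ i, u i ∈ Set.Ico (0:ℝ) 1 := fun i => ⟨(us i).1, hlt i⟩
    exact (eVariationOn.sum_le (f := f) (n := n) hu husi).trans
      (le_mul_of_one_le_left zero_le one_le_two)
  · push_neg at hlt
    have hex : ∃ i, 1 ≤ u i := hlt
    set m := Nat.find hex with hmdef
    have hum : u m = 1 := le_antisymm (us m).2 (Nat.find_spec hex)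
    have hlt' : ∀ i, i < m → u i < 1 := fun i hi => lt_of_not_ge (Nat.find_min hex hi)
    have huge : ∀ i, m ≤ i → u i = 1 := fun i hi =>
      le_antisymm (us i).2 (hum ▸ hu hi)
    have hzero : ∀ i, m ≤ i → edist (f (u (i+1))) (f (u i)) = 0 := fun i hi => by
      rw [huge i hi, huge (i+1) (hi.trans (Nat.le_succ i)), edist_self]
    have hsum : ∑ i ∈ Finset.range n, edist (f (u (i+1))) (f (u i))
        = ∑ i ∈ Finset.range (min n m), edist (f (u (i+1))) (f (u i)) := by
      symm
      apply Finset.sum_subset (Finset.range_subset_range.2 (min_le_left _ _))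
      intro i hi hni
      simp only [Finset.mem_range, lt_min_iff, not_and, not_lt] at hi hni
      exact hzero i (hni hi)
    rw [hsum]
    rcases Nat.eq_zero_or_pos (min n m) with h0 | hpos
    · rw [h0]; simp
    obtain ⟨m', hm'⟩ : ∃ m', min n m = m' + 1 := ⟨min n m - 1, by omega⟩
    have hm'm : m' + 1 ≤ m := hm' ▸ min_le_right n m
    have hmem : ∀ i, i ≤ m' → u i ∈ Set.Ico (0:ℝ) 1 :=
      fun i hi => ⟨(us i).1, hlt' i (by omega)⟩
    have h1 : ∑ i ∈ Finset.range m', edist (f (u (i+1))) (f (u i)) ≤ V := by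
      have := eVariationOn.sum_le_of_monotoneOn_Icc (f := f) (s := Set.Ico (0:ℝ) 1)
        (m := 0) (n := m') (u := u) (hu.monotoneOn _) (fun i hi => hmem i hi.2)
      simpa using this
    have h2 : edist (f (u (m'+1))) (f (u m')) ≤ V := by
      rcases eq_or_lt_of_le hm'm with heq | hlt2
      · have : u (m'+1) = 1 := huge _ heq.ge
        rw [this, hf]
        exact eVariationOn.edist_le f ⟨le_rfl, zero_lt_one⟩ (hmem m' le_rfl)
      · exact eVariationOn.edist_le f
          ⟨(us _).1, hlt' _ (by omega)⟩ (hmem m' le_rfl)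
    rw [hm', Finset.sum_range_succ, two_mul]
    exact add_le_add h1 h2

/-- Sum of variations over adjacent closed intervals. -/
lemma sum_var_Icc (F : ℝ → ℝ) (v : ℕ → ℝ) (hv : Monotone v) (m : ℕ) :
    ∑ i ∈ Finset.range m, eVariationOn F (Set.Icc (v i) (v (i+1)))
      = eVariationOn F (Set.Icc (v 0) (v m)) := by
  induction m with
  | zero =>
      rw [Finset.range_zero, Finset.sum_empty, Set.Icc_self]
      exact (eVariationOn.subsingleton F Set.subsingleton_singleton).symm
  | succ m ih =>
      rw [Finset.sum_range_succ, ih]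
      have := eVariationOn.Icc_add_Icc F (s := Set.univ)
        (hv (Nat.zero_le m)) (hv (Nat.le_succ m)) (Set.mem_univ _)
      simpa [Set.univ_inter] using this

/-- A measurable bounded function is interval integrable. -/
lemma bdd_intervalIntegrable {g : ℝ → ℝ} (hg : Measurable g) {B : ℝ}
    (h : ∀ x, |g x| ≤ B) (c d : ℝ) : IntervalIntegrable g volume c d := by
  rw [intervalIntegrable_iff]
  refine Integrable.mono' (g := fun _ => B)
    (integrableOn_const measure_Ioc_lt_top.ne)
    hg.aestronglyMeasurable.restrict (ae_of_all _ fun x => ?_)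
  simpa [Real.norm_eq_abs] using h x

/-- Integral of a dilated 1-periodic function over a period piece. -/
lemma per_int {g : ℝ → ℝ} (hg : Function.Periodic g 1) {b : ℝ} (hb : 0 < b) (i : ℕ) :
    ∫ x in ((i:ℝ)/b)..(((i:ℝ)+1)/b), g (b * x) = b⁻¹ * ∫ x in (0:ℝ)..1, g x := by
  rw [intervalIntegral.integral_comp_mul_left g hb.ne']
  have h1 : b * ((i:ℝ)/b) = i := by field_simp
  have h2 : b * (((i:ℝ)+1)/b) = (i:ℝ)+1 := by field_simp
  rw [h1, h2]
  have := hg.intervalIntegral_add_eq (i:ℝ) 0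
  simp only [zero_add] at this
  rw [this, smul_eq_mul]

/-- Exponential correlation decay of a lacunary system: for a Hadamard lacunary sequence
with ratio `q > 1` and a one-periodic, mean-zero function of total variation at most one,
`|∫₀¹ f(M_n x) f(M_{n+k} x) dx| ≤ C ‖f‖₂ q^{-k/2}` for all `n` and all `k ≥ 1`. -/
theorem stmt_10 (q : ℝ) (hq : 1 < q) :
    ∃ C > (0 : ℝ), ∀ (M : ℕ → ℕ), (∀ n, 0 < M n) → (∀ n, q * M n ≤ M (n + 1)) →
      ∀ f : ℝ → ℝ, Measurable f →
        (∀ x : ℝ, f (x + 1) = f x) →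
        eVariationOn f (Set.Ico (0 : ℝ) 1) ≤ 1 →
        (∫ x in (0:ℝ)..1, f x) = 0 →
        ∀ (n k : ℕ), 1 ≤ k →
          |∫ x in (0:ℝ)..1, f ((M n : ℝ) * x) * f ((M (n + k) : ℝ) * x)| ≤
            C * Real.sqrt (∫ x in (0:ℝ)..1, f x ^ 2) * q ^ (-(k : ℝ) / 2) := by
  refine ⟨2, two_pos, ?_⟩
  intro M hMpos hMlac f hmeas hper hvar hmean n k _hk
  have hq0 : (0:ℝ) < q := lt_trans one_pos hq
  set a := M n with hadef
  set b := M (n+k) with hbdef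
  have ha0 : (0:ℝ) < (a:ℝ) := by exact_mod_cast hMpos n
  have hb0 : (0:ℝ) < (b:ℝ) := by exact_mod_cast hMpos (n+k)
  -- lacunarity
  have hlac : ∀ j : ℕ, q ^ j * (M n : ℝ) ≤ M (n + j) := by
    intro j
    induction j with
    | zero => simp
    | succ j ih =>
        have h1 : q ^ (j+1) * (M n : ℝ) = q * (q ^ j * (M n : ℝ)) := by ring
        rw [h1]
        calc q * (q ^ j * (M n:ℝ)) ≤ q * (M (n + j) : ℝ) :=
              mul_le_mul_of_nonneg_left ih hq0.le
          _ ≤ (M (n + j + 1) : ℝ) := hMlac (n+j)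
  have hab : q ^ k * (a:ℝ) ≤ (b:ℝ) := hlac k
  -- periodicity helpers
  have hper1 : Function.Periodic f 1 := hper
  have hfract : ∀ x : ℝ, f (Int.fract x) = f x := by
    intro x
    have h := hper1.sub_int_mul_eq (x := x) (n := ⌊x⌋)
    rw [mul_one, Int.self_sub_floor] at h
    exact h
  have hperN : ∀ (j : ℕ) (x : ℝ), f (x + (j:ℝ)) = f x := by
    intro j
    induction j with
    | zero => simp
    | succ j ih =>
        intro x
        push_cast
        have h1 : x + ((j:ℝ)+1) = (x + (j:ℝ)) + 1 := by ring
        rw [h1, hper, ih]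
  -- boundedness
  set B := |f 0| + 1 with hB
  have hB0 : (0:ℝ) ≤ B := by positivity
  have hbd : ∀ x, |f x| ≤ B := by
    intro x
    have hx : Int.fract x ∈ Set.Ico (0:ℝ) 1 := ⟨Int.fract_nonneg x, Int.fract_lt_one x⟩
    have he : edist (f (Int.fract x)) (f 0) ≤ 1 :=
      (eVariationOn.edist_le f hx ⟨le_rfl, zero_lt_one⟩).trans hvar
    rw [edist_dist] at he
    have hd : dist (f (Int.fract x)) (f 0) ≤ 1 := ENNReal.ofReal_le_one.1 he
    rw [Real.dist_eq, hfract x] at hd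
    have h2 : |f x| ≤ |f x - f 0| + |f 0| := by
      calc |f x| = |f x - f 0 + f 0| := by ring_nf
        _ ≤ |f x - f 0| + |f 0| := abs_add_le _ _
    rw [hB]; linarith
  -- measurability
  have hmF : Measurable fun x : ℝ => f ((a:ℝ) * x) := hmeas.comp (measurable_id.const_mul _)
  have hmG : Measurable fun x : ℝ => f ((b:ℝ) * x) := hmeas.comp (measurable_id.const_mul _)
  -- grid
  set v : ℕ → ℝ := fun i => (i:ℝ)/(b:ℝ) with hv
  have hvmono : Monotone v := by
    intro i j hij
    have : (i:ℝ) ≤ (j:ℝ) := Nat.cast_le.2 hij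
    rw [hv]; dsimp only; gcongr
  have hv0 : v 0 = 0 := by simp [hv]
  have hvb : v b = 1 := by rw [hv]; exact div_self hb0.ne'
  have hvsucc : ∀ i : ℕ, v (i+1) = ((i:ℝ)+1)/(b:ℝ) := by
    intro i; rw [hv]; push_cast; ring
  have hvnn : ∀ i : ℕ, 0 ≤ v i := fun i => div_nonneg (Nat.cast_nonneg i) hb0.le
  have hvle1 : ∀ i : ℕ, i ≤ b → v i ≤ 1 := by
    intro i hi
    rw [hv]
    dsimp only
    rw [div_le_one hb0]
    exact_mod_cast hi
  -- variation bounds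
  have hf10 : f 1 = f 0 := by simpa using hper 0
  have hVa : eVariationOn f (Set.Icc (0:ℝ) 1) ≤ 2 := by
    refine (varIcc_le_two_mul hf10).trans ?_
    calc 2 * eVariationOn f (Set.Ico (0:ℝ) 1) ≤ 2 * 1 := mul_le_mul_right hvar 2
      _ = 2 := mul_one 2
  have hshift : ∀ j : ℕ, eVariationOn f (Set.Icc (j:ℝ) ((j:ℝ)+1))
      = eVariationOn f (Set.Icc (0:ℝ) 1) := by
    intro j
    have hmono : MonotoneOn (fun x : ℝ => x + (j:ℝ)) (Set.Icc (0:ℝ) 1) :=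
      fun x _ y _ h => by dsimp only; linarith
    have hcomp := eVariationOn.comp_eq_of_monotoneOn f (fun x : ℝ => x + (j:ℝ)) hmono
    have himg : (fun x : ℝ => x + (j:ℝ)) '' Set.Icc (0:ℝ) 1 = Set.Icc (j:ℝ) ((j:ℝ)+1) := by
      rw [Set.image_add_const_Icc, zero_add, add_comm 1 (j:ℝ)]
    rw [himg] at hcomp
    rw [← hcomp]
    exact eVariationOn.eq_of_eqOn (fun x _ => hperN j x)
  have hvarF : eVariationOn (fun x : ℝ => f ((a:ℝ) * x)) (Set.Icc (0:ℝ) 1)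
      ≤ (a:ℝ≥0∞) * 2 := by
    have hmonoa : MonotoneOn (fun x : ℝ => (a:ℝ) * x) (Set.Icc (0:ℝ) 1) :=
      fun x _ y _ h => mul_le_mul_of_nonneg_left h ha0.le
    have hcomp := eVariationOn.comp_eq_of_monotoneOn f (fun x : ℝ => (a:ℝ) * x) hmonoa
    have himg : (fun x : ℝ => (a:ℝ) * x) '' Set.Icc (0:ℝ) 1 = Set.Icc (0:ℝ) (a:ℝ) := by
      rw [Set.image_mul_left_Icc' ha0, mul_zero, mul_one]
    rw [himg] at hcomp
    have h1 : eVariationOn (fun x : ℝ => f ((a:ℝ) * x)) (Set.Icc (0:ℝ) 1)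
        = eVariationOn f (Set.Icc (0:ℝ) (a:ℝ)) := hcomp
    rw [h1]
    have h2 := sum_var_Icc f (fun j : ℕ => (j:ℝ)) (fun i j hij => Nat.cast_le.2 hij) a
    push_cast at h2
    rw [← h2]
    have h3 : ∀ j ∈ Finset.range a,
        eVariationOn f (Set.Icc ((j:ℝ)) ((j:ℝ)+1)) = eVariationOn f (Set.Icc (0:ℝ) 1) :=
      fun j _ => hshift j
    rw [Finset.sum_congr rfl h3, Finset.sum_const, Finset.card_range, nsmul_eq_mul]
    exact mul_le_mul_right hVa _
  have hvarFne : (a:ℝ≥0∞) * 2 ≠ ⊤ :=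
    ENNReal.mul_ne_top (ENNReal.natCast_ne_top a) (by norm_num)
  set W : ℕ → ℝ≥0∞ :=
    fun i => eVariationOn (fun x : ℝ => f ((a:ℝ) * x)) (Set.Icc (v i) (v (i+1))) with hW
  have hsumW : ∑ i ∈ Finset.range b, W i
      = eVariationOn (fun x : ℝ => f ((a:ℝ) * x)) (Set.Icc (0:ℝ) 1) := by
    have h := sum_var_Icc (fun x : ℝ => f ((a:ℝ) * x)) v hvmono b
    rw [hv0, hvb] at h
    exact h
  have hWle : ∀ i, i < b → W i ≤ (a:ℝ≥0∞) * 2 := by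
    intro i hi
    refine le_trans ?_ hvarF
    exact eVariationOn.mono _ (Set.Icc_subset_Icc (hvnn i) (hvle1 (i+1) hi))
  have hWne : ∀ i, i < b → W i ≠ ⊤ := fun i hi => ne_top_of_le_ne_top hvarFne (hWle i hi)
  -- integrabilities
  have hintFG : ∀ c d : ℝ,
      IntervalIntegrable (fun x => f ((a:ℝ) * x) * f ((b:ℝ) * x)) volume c d := by
    intro c d
    refine bdd_intervalIntegrable (hmF.mul hmG) (B := B * B) (fun x => ?_) c d
    rw [Pi.mul_apply, abs_mul]
    exact mul_le_mul (hbd _) (hbd _) (abs_nonneg _) hB0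
  have hintG : ∀ c d : ℝ, IntervalIntegrable (fun x => f ((b:ℝ) * x)) volume c d :=
    fun c d => bdd_intervalIntegrable hmG (fun x => hbd _) c d
  have hintabsG : ∀ c d : ℝ, IntervalIntegrable (fun x => |f ((b:ℝ) * x)|) volume c d :=
    fun c d => (hintG c d).abs
  have hintf : ∀ c d : ℝ, IntervalIntegrable f volume c d :=
    fun c d => bdd_intervalIntegrable hmeas hbd c d
  have hintabsf : IntervalIntegrable (fun x => |f x|) volume 0 1 := (hintf 0 1).abs
  have hintf2 : IntervalIntegrable (fun x => f x ^ 2) volume 0 1 := by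
    refine bdd_intervalIntegrable (hmeas.pow_const 2) (B := B ^ 2) (fun x => ?_) 0 1
    rw [abs_pow]
    exact pow_le_pow_left₀ (abs_nonneg _) (hbd x) 2
  -- L1 and S
  set L1 : ℝ := ∫ x in (0:ℝ)..1, |f x| with hL1
  set S : ℝ := Real.sqrt (∫ x in (0:ℝ)..1, f x ^ 2) with hS
  have hL1nn : 0 ≤ L1 :=
    intervalIntegral.integral_nonneg zero_le_one fun x _ => abs_nonneg _
  have hL1S : L1 ≤ S := by
    have h0 : 0 ≤ ∫ x in (0:ℝ)..1, (|f x| - L1)^2 :=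
      intervalIntegral.integral_nonneg zero_le_one fun x _ => sq_nonneg _
    have hexp : (fun x => (|f x| - L1)^2)
        = fun x => (f x ^ 2 - (2*L1) * |f x|) + L1^2 := by
      funext x
      have hsq : |f x|^2 = f x ^ 2 := sq_abs _
      nlinarith [hsq]
    rw [hexp] at h0
    rw [intervalIntegral.integral_add (hintf2.sub (hintabsf.const_mul _))
        intervalIntegrable_const,
        intervalIntegral.integral_sub hintf2 (hintabsf.const_mul _),
        intervalIntegral.integral_const_mul, intervalIntegral.integral_const] at h0
    simp only [smul_eq_mul, sub_zero, one_mul, ← hL1] at h0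
    have hkey : L1^2 ≤ ∫ x in (0:ℝ)..1, f x ^ 2 := by nlinarith
    rw [hS, ← Real.sqrt_sq hL1nn]
    exact Real.sqrt_le_sqrt hkey
  have hSnn : 0 ≤ S := Real.sqrt_nonneg _
  -- zero mean and L1 on pieces
  have hzeroG : ∀ i : ℕ, ∫ x in v i..v (i+1), f ((b:ℝ) * x) = 0 := by
    intro i
    rw [hvsucc i]
    have h := per_int hper1 hb0 (b := (b:ℝ)) i
    rw [hmean, mul_zero] at h
    exact h
  have hperabsf : Function.Periodic (fun x => |f x|) 1 := fun x => by simp [hper x]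
  have habsG : ∀ i : ℕ, (∫ x in v i..v (i+1), |f ((b:ℝ) * x)|) = (b:ℝ)⁻¹ * L1 := by
    intro i
    rw [hvsucc i]
    exact per_int hperabsf hb0 (b := (b:ℝ)) i
  -- split
  have hsplit : (∫ x in (0:ℝ)..1, f ((a:ℝ) * x) * f ((b:ℝ) * x))
      = ∑ i ∈ Finset.range b, ∫ x in v i..v (i+1), f ((a:ℝ) * x) * f ((b:ℝ) * x) := by
    rw [intervalIntegral.sum_integral_adjacent_intervals (fun i _ => hintFG _ _), hv0, hvb]
  -- per piece estimate
  have hpiece : ∀ i, i < b →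
      |∫ x in v i..v (i+1), f ((a:ℝ) * x) * f ((b:ℝ) * x)|
        ≤ (W i).toReal * ((b:ℝ)⁻¹ * L1) := by
    intro i hi
    have hle : v i ≤ v (i+1) := hvmono (Nat.le_succ i)
    set c := f ((a:ℝ) * v i) with hc
    have heq : (∫ x in v i..v (i+1), f ((a:ℝ) * x) * f ((b:ℝ) * x))
        = ∫ x in v i..v (i+1), (f ((a:ℝ) * x) - c) * f ((b:ℝ) * x) := by
      have hfe : (fun x => (f ((a:ℝ) * x) - c) * f ((b:ℝ) * x))
          = fun x => f ((a:ℝ) * x) * f ((b:ℝ) * x) - c * f ((b:ℝ) * x) := by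
        funext x; ring
      rw [hfe, intervalIntegral.integral_sub (hintFG _ _) ((hintG _ _).const_mul c),
        intervalIntegral.integral_const_mul, hzeroG i, mul_zero, sub_zero]
    rw [heq]
    have hptw : ∀ x ∈ Set.uIoc (v i) (v (i+1)),
        ‖(f ((a:ℝ) * x) - c) * f ((b:ℝ) * x)‖ ≤ (W i).toReal * |f ((b:ℝ) * x)| := by
      intro x hx
      have hxI : x ∈ Set.Icc (v i) (v (i+1)) := by
        rw [Set.uIoc_of_le hle] at hx
        exact ⟨hx.1.le, hx.2⟩
      have hed : edist (f ((a:ℝ) * x)) (f ((a:ℝ) * v i)) ≤ W i :=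
        eVariationOn.edist_le (fun y : ℝ => f ((a:ℝ) * y)) hxI ⟨le_rfl, hle⟩
      have hdist : |f ((a:ℝ) * x) - c| ≤ (W i).toReal := by
        have h' := ENNReal.toReal_mono (hWne i hi) hed
        rw [edist_dist, ENNReal.toReal_ofReal dist_nonneg, Real.dist_eq] at h'
        exact h'
      rw [Real.norm_eq_abs, abs_mul]
      exact mul_le_mul_of_nonneg_right hdist (abs_nonneg _)
    have hbound : IntervalIntegrable (fun x => (W i).toReal * |f ((b:ℝ) * x)|)
        volume (v i) (v (i+1)) := (hintabsG _ _).const_mul _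
    have hnorm := intervalIntegral.norm_integral_le_abs_of_norm_le
      (μ := volume) (f := fun x => (f ((a:ℝ) * x) - c) * f ((b:ℝ) * x))
      (g := fun x => (W i).toReal * |f ((b:ℝ) * x)|)
      ((ae_restrict_iff' measurableSet_uIoc).2 (ae_of_all _ hptw)) hbound
    rw [Real.norm_eq_abs] at hnorm
    refine hnorm.trans ?_
    rw [intervalIntegral.integral_const_mul, habsG i]
    rw [abs_of_nonneg (by positivity)]
  -- sum up
  have hWsumle : ∑ i ∈ Finset.range b, (W i).toReal ≤ 2 * (a:ℝ) := by
    have h1 : ∑ i ∈ Finset.range b, (W i).toReal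
        = (∑ i ∈ Finset.range b, W i).toReal :=
      (ENNReal.toReal_sum (fun i hi => hWne i (Finset.mem_range.1 hi))).symm
    rw [h1, hsumW]
    have h2 := ENNReal.toReal_mono hvarFne hvarF
    rw [ENNReal.toReal_mul, ENNReal.toReal_natCast, ENNReal.toReal_ofNat] at h2
    linarith
  have hsum2 : |∫ x in (0:ℝ)..1, f ((a:ℝ) * x) * f ((b:ℝ) * x)|
      ≤ (2 * (a:ℝ)) * ((b:ℝ)⁻¹ * L1) := by
    rw [hsplit]
    calc |∑ i ∈ Finset.range b, ∫ x in v i..v (i+1), f ((a:ℝ) * x) * f ((b:ℝ) * x)|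
        ≤ ∑ i ∈ Finset.range b,
            |∫ x in v i..v (i+1), f ((a:ℝ) * x) * f ((b:ℝ) * x)| :=
          Finset.abs_sum_le_sum_abs _ _
      _ ≤ ∑ i ∈ Finset.range b, (W i).toReal * ((b:ℝ)⁻¹ * L1) :=
          Finset.sum_le_sum (fun i hi => hpiece i (Finset.mem_range.1 hi))
      _ = (∑ i ∈ Finset.range b, (W i).toReal) * ((b:ℝ)⁻¹ * L1) :=
          (Finset.sum_mul _ _ _).symm
      _ ≤ (2 * (a:ℝ)) * ((b:ℝ)⁻¹ * L1) := by
          apply mul_le_mul_of_nonneg_right hWsumle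
          positivity
  -- final comparison
  have hqk : (0:ℝ) < q ^ k := pow_pos hq0 k
  have hfrac : (a:ℝ) * (b:ℝ)⁻¹ ≤ q ^ (-(k:ℝ)) := by
    rw [Real.rpow_neg hq0.le, Real.rpow_natCast]
    rw [← div_eq_mul_inv, inv_eq_one_div, div_le_div_iff₀ hb0 hqk]
    nlinarith [hab]
  have hqhalf : q ^ (-(k:ℝ)) ≤ q ^ (-(k:ℝ) / 2) := by
    apply Real.rpow_le_rpow_of_exponent_le hq.le
    have : (0:ℝ) ≤ (k:ℝ) := Nat.cast_nonneg k
    linarith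
  have hqpos2 : (0:ℝ) < q ^ (-(k:ℝ) / 2) := Real.rpow_pos_of_pos hq0 _
  calc |∫ x in (0:ℝ)..1, f ((a:ℝ) * x) * f ((b:ℝ) * x)|
      ≤ (2 * (a:ℝ)) * ((b:ℝ)⁻¹ * L1) := hsum2
    _ = 2 * (((a:ℝ) * (b:ℝ)⁻¹) * L1) := by ring
    _ ≤ 2 * (q ^ (-(k:ℝ) / 2) * S) := by
        apply mul_le_mul_of_nonneg_left _ (by norm_num)
        exact mul_le_mul (hfrac.trans hqhalf) hL1S hL1nn hqpos2.le
    _ = 2 * S * q ^ (-(k:ℝ) / 2) := by ring
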